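/- Let A be a noetherian commutative ring and let f₁, …, f_n be elements of the formal power series ring A[[y₁, …, y_n]], each with zero constant term, such that the determinant of the n × n matrix whose (i,j)-entry is the coefficient of y_j in f_i is a unit of A. Then the ideal (f₁, …, f_n) equals the ideal (y₁, …, y_n); in particular the quotient ring A[[y₁, …, y_n]]/(f₁, …, f_n) is isomorphic to A. -/

import Mathlib

/-!
Basic infrastructure for jet algebras and jet modules, following the paper
"Basics of jet modules and algebraic linear differential operators".

For a ring homomorphism `k → A`, the diagonal ideal `I_{A/k} ⊆ A ⊗[k] A` is the kernel of
the multiplication map; the `N`-th jet algebra is `J^N(A/k) = (A ⊗[k] A) ⧸ I_{A/k}^{N+1}`,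
with its two `A`-algebra structure maps `p₁ : a ↦ a ⊗ 1` and `p₂ : a ↦ 1 ⊗ a`.
For an `A`-module `M`, `A ⊗[k] M` is a module over `A ⊗[k] A` via
`(a ⊗ b) • (x ⊗ m) = (a * x) ⊗ (b • m)`, and the `N`-th jet module is
`J^N(M/k) = (A ⊗[k] M) ⧸ I_{A/k}^{N+1} · (A ⊗[k] M)`, a module over `J^N(A/k)`,
equipped with the universal filtered derivation `d^N : M → J^N(M/k)`, `m ↦ [1 ⊗ m]`.
-/

open scoped TensorProduct

namespace JetPaper

section Bimodule

variable (R B C M P : Type*) [CommRing R]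
  [CommRing B] [Algebra R B] [CommRing C] [Algebra R C]
  [AddCommGroup M] [Module R M] [Module B M] [IsScalarTower R B M]
  [AddCommGroup P] [Module R P] [Module C P] [IsScalarTower R C P]

/-- The action of `C` on `M ⊗[R] P` through the right-hand factor, as an algebra
homomorphism into endomorphisms. -/
noncomputable def rightSMulEnd : C →ₐ[R] Module.End R (M ⊗[R] P) where
  toFun c := LinearMap.lTensor M (Algebra.lsmul R R P c)
  map_one' := LinearMap.ext fun x => by
    induction x using TensorProduct.induction_on with
    | zero => simp
    | tmul m p => simp
    | add u v hu hv => simp only [map_add, hu, hv]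
  map_mul' c c' := LinearMap.ext fun x => by
    induction x using TensorProduct.induction_on with
    | zero => simp
    | tmul m p => simp [mul_smul, Module.End.mul_apply]
    | add u v hu hv => simp only [map_add, Module.End.mul_apply] at hu hv ⊢; rw [hu, hv]
  map_zero' := LinearMap.ext fun x => by
    induction x using TensorProduct.induction_on with
    | zero => simp
    | tmul m p => simp
    | add u v hu hv => simp only [map_add, hu, hv]
  map_add' c c' := LinearMap.ext fun x => by
    induction x using TensorProduct.induction_on with
    | zero => simp
    | tmul m p => simp [add_smul, TensorProduct.tmul_add]
    | add u v hu hv =>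
        simp only [map_add, LinearMap.add_apply] at hu hv ⊢
        rw [hu, hv]
  commutes' r := LinearMap.ext fun x => by
    induction x using TensorProduct.induction_on with
    | zero => simp
    | tmul m p =>
        simp only [LinearMap.lTensor_tmul, Algebra.lsmul_coe,
          Module.algebraMap_end_apply, algebraMap_smul]
        rw [TensorProduct.tmul_smul]
    | add u v hu hv => simp only [map_add, hu, hv]

@[simp] lemma rightSMulEnd_tmul (c : C) (m : M) (p : P) :
    rightSMulEnd R C M P c (m ⊗ₜ[R] p) = m ⊗ₜ[R] (c • p) := by
  simp [rightSMulEnd]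

/-- The algebra homomorphism `B ⊗[R] C → End (M ⊗[R] P)` realizing the natural
bimodule structure `(b ⊗ c) • (m ⊗ p) = (b • m) ⊗ (c • p)`. -/
noncomputable def bimodMap : (B ⊗[R] C) →ₐ[R] Module.End R (M ⊗[R] P) :=
  Algebra.TensorProduct.lift (Algebra.lsmul R R (M ⊗[R] P)) (rightSMulEnd R C M P)
    (fun b c => LinearMap.ext fun x => by
      induction x using TensorProduct.induction_on with
      | zero => simp [Module.End.mul_apply]
      | tmul m p => simp [Module.End.mul_apply, TensorProduct.smul_tmul']
      | add u v hu hv =>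
          simp only [Module.End.mul_apply] at hu hv ⊢
          simp only [map_add, hu, hv])

/-- The `B ⊗[R] C`-module structure on `M ⊗[R] P`, where `B` acts through the left factor
and `C` through the right one. -/
noncomputable def bimodule : Module (B ⊗[R] C) (M ⊗[R] P) :=
  Module.compHom _ (bimodMap R B C M P).toRingHom

/-- The action of `C` on `M ⊗[R] P` through the right-hand factor, as a module structure. -/
noncomputable def rightTensorModule : Module C (M ⊗[R] P) :=
  Module.compHom _ (rightSMulEnd R C M P).toRingHom

end Bimodule

section BiTensorDef

/-- Type synonym for `M ⊗[R] P`, regarded as a module over `B ⊗[R] C`, where `B` acts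
through the left factor and `C` through the right factor. -/
@[nolint unusedArguments]
def BiTensor (R B C M P : Type*) [CommRing R]
    [CommRing B] [Algebra R B] [CommRing C] [Algebra R C]
    [AddCommGroup M] [Module R M] [Module B M] [IsScalarTower R B M]
    [AddCommGroup P] [Module R P] [Module C P] [IsScalarTower R C P] : Type _ :=
  M ⊗[R] P

variable (R B C M P : Type*) [CommRing R]
  [CommRing B] [Algebra R B] [CommRing C] [Algebra R C]
  [AddCommGroup M] [Module R M] [Module B M] [IsScalarTower R B M]
  [AddCommGroup P] [Module R P] [Module C P] [IsScalarTower R C P]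

/-- The canonical (identity) map `M ⊗[R] P → BiTensor R B C M P`. -/
def BiTensor.of : M ⊗[R] P → BiTensor R B C M P := id

noncomputable instance : AddCommGroup (BiTensor R B C M P) :=
  inferInstanceAs (AddCommGroup (M ⊗[R] P))

noncomputable instance : Module R (BiTensor R B C M P) :=
  inferInstanceAs (Module R (M ⊗[R] P))

noncomputable instance : Module (B ⊗[R] C) (BiTensor R B C M P) := bimodule R B C M P

noncomputable instance : Module C (BiTensor R B C M P) := rightTensorModule R C M P

lemma BiTensor.smul_of (b : B) (c : C) (m : M) (p : P) :
    (b ⊗ₜ[R] c : B ⊗[R] C) • BiTensor.of R B C M P (m ⊗ₜ[R] p) =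
      BiTensor.of R B C M P ((b • m) ⊗ₜ[R] (c • p)) := by
  show bimodMap R B C M P (b ⊗ₜ[R] c) (m ⊗ₜ[R] p) = _
  rw [show bimodMap R B C M P (b ⊗ₜ[R] c) = Algebra.lsmul R R (M ⊗[R] P) b *
    rightSMulEnd R C M P c from Algebra.TensorProduct.lift_tmul _ _ _ _ _]
  simp only [Module.End.mul_apply, TensorProduct.smul_tmul', rightSMulEnd_tmul,
    Algebra.lsmul_coe]
  rfl

lemma BiTensor.rsmul_of (c : C) (m : M) (p : P) :
    c • BiTensor.of R B C M P (m ⊗ₜ[R] p) = BiTensor.of R B C M P (m ⊗ₜ[R] (c • p)) := by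
  show rightSMulEnd R C M P c (m ⊗ₜ[R] p) = _
  simp only [rightSMulEnd_tmul]
  rfl

attribute [local instance] Algebra.TensorProduct.rightAlgebra in
instance : IsScalarTower C (B ⊗[R] C) (BiTensor R B C M P) := by
  refine IsScalarTower.of_algebraMap_smul
    (R := C) (A := B ⊗[R] C) (M := BiTensor R B C M P) fun c x => ?_
  have halg : algebraMap C (B ⊗[R] C) c = (1 : B) ⊗ₜ[R] c := rfl
  have key : ∀ y : M ⊗[R] P,
      ((1 : B) ⊗ₜ[R] c : B ⊗[R] C) • BiTensor.of R B C M P y =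
        c • BiTensor.of R B C M P y := by
    intro y
    induction y using TensorProduct.induction_on with
    | zero =>
        show ((1 : B) ⊗ₜ[R] c : B ⊗[R] C) • (0 : BiTensor R B C M P) =
          c • (0 : BiTensor R B C M P)
        rw [smul_zero, smul_zero]
    | tmul m p => rw [BiTensor.smul_of, one_smul, BiTensor.rsmul_of]
    | add u v hu hv =>
        have hadd : ∀ u v : M ⊗[R] P, BiTensor.of R B C M P (u + v) =
            BiTensor.of R B C M P u + BiTensor.of R B C M P v := fun _ _ => rfl
        rw [hadd, smul_add, smul_add, hu, hv]
  rw [halg]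
  exact key x

end BiTensorDef

section JetDef

variable (k A : Type*) [CommRing k] [CommRing A] [Algebra k A]

/-- The diagonal ideal `I_{A/k} ⊆ A ⊗[k] A`: the kernel of the multiplication map. -/
noncomputable abbrev diagIdeal : Ideal (A ⊗[k] A) := KaehlerDifferential.ideal k A

/-- The `N`-th jet algebra `J^N(A/k) = (A ⊗[k] A) ⧸ I_{A/k}^{N+1}`. -/
noncomputable abbrev JetAlg (N : ℕ) : Type _ :=
  (A ⊗[k] A) ⧸ (diagIdeal k A ^ (N + 1))

/-- The first `A`-algebra structure map `p₁ : A → J^N(A/k)`, `a ↦ a ⊗ 1`. -/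
noncomputable def jetP1 (N : ℕ) : A →+* JetAlg k A N :=
  (Ideal.Quotient.mk _).comp Algebra.TensorProduct.includeLeftRingHom

/-- The second `A`-algebra structure map `p₂ : A → J^N(A/k)`, `a ↦ 1 ⊗ a`. -/
noncomputable def jetP2 (N : ℕ) : A →+* JetAlg k A N :=
  (Ideal.Quotient.mk _).comp (Algebra.TensorProduct.includeRight : A →ₐ[k] A ⊗[k] A).toRingHom

variable (M : Type*) [AddCommGroup M] [Module k M] [Module A M] [IsScalarTower k A M]

/-- `A ⊗[k] M` is a module over `A ⊗[k] A` via `(a ⊗ b) • (x ⊗ m) = (a * x) ⊗ (b • m)`. -/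
noncomputable instance jetTensorModule : Module (A ⊗[k] A) (A ⊗[k] M) :=
  bimodule k A A A M

@[simp] lemma jet_smul_tmul (a b x : A) (m : M) :
    (a ⊗ₜ[k] b : A ⊗[k] A) • (x ⊗ₜ[k] m : A ⊗[k] M) = (a * x) ⊗ₜ[k] (b • m) := by
  show bimodMap k A A A M (a ⊗ₜ[k] b) (x ⊗ₜ[k] m) = _
  rw [show bimodMap k A A A M (a ⊗ₜ[k] b) = Algebra.lsmul k k (A ⊗[k] M) a *
    rightSMulEnd k A A M b from Algebra.TensorProduct.lift_tmul _ _ _ _ _]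
  simp [Module.End.mul_apply, TensorProduct.smul_tmul', smul_eq_mul]

instance jetTower1 : IsScalarTower A (A ⊗[k] A) (A ⊗[k] M) :=
  IsScalarTower.of_algebraMap_smul fun a x => by
    have halg : algebraMap A (A ⊗[k] A) a = a ⊗ₜ[k] (1 : A) := rfl
    rw [halg]
    induction x using TensorProduct.induction_on with
    | zero => simp
    | tmul y m => rw [jet_smul_tmul, TensorProduct.smul_tmul']; simp
    | add u v hu hv => rw [smul_add, hu, hv, smul_add]

instance jetTower0 : IsScalarTower k (A ⊗[k] A) (A ⊗[k] M) :=
  IsScalarTower.of_algebraMap_smul fun r x => by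
    rw [IsScalarTower.algebraMap_apply k A (A ⊗[k] A), algebraMap_smul, algebraMap_smul]

/-- The `N`-th jet module `J^N(M/k) = (A ⊗[k] M) ⧸ I_{A/k}^{N+1}·(A ⊗[k] M)`;
it is a module over `J^N(A/k)`. -/
noncomputable abbrev JetMod (N : ℕ) : Type _ :=
  (A ⊗[k] M) ⧸ ((diagIdeal k A ^ (N + 1)) • (⊤ : Submodule (A ⊗[k] A) (A ⊗[k] M)))

/-- The universal (filtered) derivation `d^N_{M/k} : M → J^N(M/k)`, `m ↦ [1 ⊗ m]`. -/
noncomputable def jetD (N : ℕ) : M → JetMod k A M N :=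
  fun m => Submodule.Quotient.mk ((1 : A) ⊗ₜ[k] m)

instance jetModTower (N : ℕ) : IsScalarTower k A (JetMod k A M N) :=
  IsScalarTower.of_algebraMap_smul fun r x => by
    obtain ⟨y, rfl⟩ := Submodule.Quotient.mk_surjective _ x
    rw [← Submodule.Quotient.mk_smul, ← Submodule.Quotient.mk_smul, algebraMap_smul]

instance jetQuotTower (N : ℕ) : IsScalarTower A (JetAlg k A N) (JetMod k A M N) := by
  refine IsScalarTower.of_algebraMap_smul
    (R := A) (A := JetAlg k A N) (M := JetMod k A M N) fun a x => ?_
  obtain ⟨y, rfl⟩ := Submodule.Quotient.mk_surjective _ x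
  have h1 : algebraMap A (JetAlg k A N) a • (Submodule.Quotient.mk y : JetMod k A M N) =
      Submodule.Quotient.mk ((algebraMap A (A ⊗[k] A) a) • y) := rfl
  rw [h1, algebraMap_smul (A ⊗[k] A) a y, Submodule.Quotient.mk_smul]

end JetDef

end JetPaper


namespace JetPaper

namespace FIFT

open MvPowerSeries Finsupp Finset

variable {A : Type*} [CommRing A] {n : ℕ}

/-- total degree of a monomial -/
def deg (d : Fin n →₀ ℕ) : ℕ := ∑ i, d i

lemma deg_add (d e : Fin n →₀ ℕ) : deg (d + e) = deg d + deg e := by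
  simp [deg, Finset.sum_add_distrib]

lemma deg_single (j : Fin n) : deg (Finsupp.single j 1) = 1 := by
  simp [deg, Finsupp.single_apply]

lemma deg_zero : deg (0 : Fin n →₀ ℕ) = 0 := by simp [deg]

lemma deg_eq_zero {d : Fin n →₀ ℕ} (h : deg d = 0) : d = 0 := by
  rw [deg, Finset.sum_eq_zero_iff] at h
  ext i
  exact h i (Finset.mem_univ i)

lemma eq_zero_or_single {d : Fin n →₀ ℕ} (h : deg d ≤ 1) :
    d = 0 ∨ ∃ j, d = Finsupp.single j 1 := by
  by_cases h0 : d = 0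
  · exact Or.inl h0
  right
  obtain ⟨j, hj⟩ := Finsupp.support_nonempty_iff.mpr h0
  refine ⟨j, ?_⟩
  have hdj : 1 ≤ d j := Nat.one_le_iff_ne_zero.mpr (Finsupp.mem_support_iff.mp hj)
  ext i
  rw [Finsupp.single_apply]
  by_cases hij : j = i
  · subst hij
    rw [if_pos rfl]
    have : d j ≤ deg d :=
      Finset.single_le_sum (f := fun i => d i) (fun _ _ => Nat.zero_le _) (Finset.mem_univ j)
    omega
  · rw [if_neg hij]
    by_contra hne
    have h1 : 1 ≤ d i := Nat.one_le_iff_ne_zero.mpr hne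
    have hsub : ({i, j} : Finset (Fin n)) ⊆ Finset.univ := Finset.subset_univ _
    have hij' : i ≠ j := fun h => hij h.symm
    have h2 : d i + d j ≤ deg d := by
      have := Finset.sum_le_sum_of_subset (f := fun k => d k) hsub
      rwa [Finset.sum_pair hij'] at this
    omega

/-- order at least `m` -/
def OrdGe (m : ℕ) (g : MvPowerSeries (Fin n) A) : Prop :=
  ∀ d : Fin n →₀ ℕ, deg d < m → coeff (R := A) d g = 0

lemma OrdGe.mul {p q : ℕ} {a b : MvPowerSeries (Fin n) A}
    (ha : OrdGe p a) (hb : OrdGe q b) : OrdGe (p + q) (a * b) := by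
  intro d hd
  classical
  rw [coeff_mul]
  apply Finset.sum_eq_zero
  rintro ⟨u, v⟩ huv
  rw [HasAntidiagonal.mem_antidiagonal] at huv
  have hlt : deg u + deg v < p + q := by rw [← deg_add, huv]; exact hd
  rcases lt_or_ge (deg u) p with h | h
  · rw [ha u h, zero_mul]
  · rw [hb v (by omega), mul_zero]

lemma OrdGe.c_mul {m : ℕ} {b : MvPowerSeries (Fin n) A} (a : A)
    (hb : OrdGe m b) : OrdGe m (C (σ := Fin n) (R := A) a * b) := by
  intro d hd
  rw [coeff_C_mul, hb d hd, mul_zero]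

open scoped Classical in
/-- The `j`-th slice of `g`: collects the monomials whose least occurring variable is `y_j`,
divided by `y_j`. -/
noncomputable def slice (g : MvPowerSeries (Fin n) A) (j : Fin n) :
    MvPowerSeries (Fin n) A :=
  fun d => if ∀ i < j, d i = 0 then coeff (R := A) (d + Finsupp.single j 1) g else 0

open scoped Classical in
lemma coeff_slice (g : MvPowerSeries (Fin n) A) (j : Fin n) (d : Fin n →₀ ℕ) :
    coeff (R := A) d (slice g j) =
      if ∀ i < j, d i = 0 then coeff (R := A) (d + Finsupp.single j 1) g else 0 := by
  rw [coeff_apply, slice]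

lemma slice_ordGe {m : ℕ} {g : MvPowerSeries (Fin n) A} (hg : OrdGe (m + 1) g) (j : Fin n) :
    OrdGe m (slice g j) := by
  intro d hd
  classical
  rw [coeff_slice]
  split_ifs with h
  · apply hg
    rw [deg_add, deg_single]
    omega
  · rfl

lemma coeff_X_mul_slice (g : MvPowerSeries (Fin n) A) (j : Fin n) (e : Fin n →₀ ℕ) :
    coeff (R := A) e (X j * slice g j) =
      if 1 ≤ e j ∧ ∀ i < j, e i = 0 then coeff (R := A) e g else 0 := by
  classical
  rw [X, coeff_monomial_mul]
  by_cases h1 : Finsupp.single j 1 ≤ e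
  · rw [if_pos h1, one_mul, coeff_slice]
    have h1' : 1 ≤ e j := Finsupp.single_le_iff.mp h1
    have key : ∀ i, i ≠ j → ((e - Finsupp.single j 1 : Fin n →₀ ℕ)) i = e i := by
      intro i hi
      rw [Finsupp.tsub_apply, Finsupp.single_apply, if_neg (Ne.symm hi), tsub_zero]
    have hre : (e - Finsupp.single j 1) + Finsupp.single j 1 = e := tsub_add_cancel_of_le h1
    rw [hre]
    have hcond : (∀ i < j, ((e - Finsupp.single j 1 : Fin n →₀ ℕ)) i = 0) ↔ (1 ≤ e j ∧ ∀ i < j, e i = 0) := by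
      constructor
      · intro h
        exact ⟨h1', fun i hi => by rw [← key i (ne_of_lt hi)]; exact h i hi⟩
      · rintro ⟨-, h⟩ i hi
        rw [key i (ne_of_lt hi)]
        exact h i hi
    rw [if_congr hcond rfl rfl]
  · rw [if_neg h1, if_neg]
    rintro ⟨hj, -⟩
    exact h1 (Finsupp.single_le_iff.mpr hj)

lemma sum_X_mul_slice (g : MvPowerSeries (Fin n) A) (hg : coeff (R := A) 0 g = 0) :
    ∑ j : Fin n, X j * slice g j = g := by
  apply MvPowerSeries.ext
  intro e
  rw [map_sum]
  simp only [coeff_X_mul_slice]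
  by_cases he : e = 0
  · subst he
    rw [hg]
    apply Finset.sum_eq_zero
    intro j _
    rw [if_neg]
    rintro ⟨hj, -⟩
    simp at hj
  · have hsupp : e.support.Nonempty := Finsupp.support_nonempty_iff.mpr he
    set j₀ := e.support.min' hsupp with hj₀
    rw [Finset.sum_eq_single j₀]
    · rw [if_pos]
      constructor
      · exact Nat.one_le_iff_ne_zero.mpr
          (Finsupp.mem_support_iff.mp (e.support.min'_mem hsupp))
      · intro i hi
        by_contra hne
        have : j₀ ≤ i := e.support.min'_le i (Finsupp.mem_support_iff.mpr hne)
        omega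
    · intro j _ hj
      rw [if_neg]
      rintro ⟨h1, h2⟩
      have hjs : j ∈ e.support := Finsupp.mem_support_iff.mpr (by omega)
      have hle : j₀ ≤ j := e.support.min'_le j hjs
      have hj₀s : j₀ ∈ e.support := e.support.min'_mem hsupp
      rcases lt_or_eq_of_le hle with h | h
      · exact Finsupp.mem_support_iff.mp hj₀s (h2 j₀ h)
      · exact hj h.symm
    · intro h
      exact absurd (Finset.mem_univ j₀) h

section Step

variable (K : Matrix (Fin n) (Fin n) A) (q : Fin n → MvPowerSeries (Fin n) A)

/-- Coefficients of the approximation step. -/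
noncomputable def cStep (g : MvPowerSeries (Fin n) A) (i : Fin n) :
    MvPowerSeries (Fin n) A :=
  ∑ j, C (σ := Fin n) (R := A) (K j i) * slice g j

/-- Error term of the approximation step. -/
noncomputable def pStep (g : MvPowerSeries (Fin n) A) : MvPowerSeries (Fin n) A :=
  -∑ j, ∑ i, C (σ := Fin n) (R := A) (K j i) * (q i * slice g j)

lemma cStep_ordGe {m : ℕ} {g : MvPowerSeries (Fin n) A} (hg : OrdGe (m + 1) g) (i : Fin n) :
    OrdGe m (cStep K g i) := by
  intro d hd
  unfold cStep
  rw [map_sum]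
  apply Finset.sum_eq_zero
  intro j _
  exact OrdGe.c_mul _ (slice_ordGe hg j) d hd

lemma pStep_ordGe (hq : ∀ i, OrdGe 2 (q i)) {m : ℕ} {g : MvPowerSeries (Fin n) A}
    (hg : OrdGe (m + 1) g) : OrdGe (m + 2) (pStep K q g) := by
  intro d hd
  unfold pStep
  rw [map_neg, map_sum, neg_eq_zero]
  apply Finset.sum_eq_zero
  intro j _
  rw [map_sum]
  apply Finset.sum_eq_zero
  intro i _
  refine OrdGe.c_mul _ ((hq i).mul (slice_ordGe hg j)) d ?_
  omega

lemma step_eq (f : Fin n → MvPowerSeries (Fin n) A)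
    (hXid : ∀ l, (X l : MvPowerSeries (Fin n) A) =
      ∑ i, C (σ := Fin n) (R := A) (K l i) * (f i - q i))
    (g : MvPowerSeries (Fin n) A) (hg : coeff (R := A) 0 g = 0) :
    g = ∑ i, cStep K g i * f i + pStep K q g := by
  conv_lhs => rw [← sum_X_mul_slice g hg]
  have h1 : ∀ j : Fin n, X j * slice g j
      = (∑ i, C (σ := Fin n) (R := A) (K j i) * (f i * slice g j))
        - ∑ i, C (σ := Fin n) (R := A) (K j i) * (q i * slice g j) := by
    intro j
    rw [hXid j, Finset.sum_mul, ← Finset.sum_sub_distrib]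
    exact Finset.sum_congr rfl fun i _ => by ring
  simp only [h1]
  rw [Finset.sum_sub_distrib, sub_eq_add_neg]
  congr 1
  rw [Finset.sum_comm]
  unfold cStep
  refine Finset.sum_congr rfl fun i _ => ?_
  rw [Finset.sum_mul]
  exact Finset.sum_congr rfl fun j _ => by ring

end Step

/-- Main lemma: under the hypotheses of the inverse function theorem, the ideal spanned
by the `f i` is the kernel of the constant coefficient map. -/
lemma span_eq_ker (f : Fin n → MvPowerSeries (Fin n) A)
    (h0 : ∀ i, MvPowerSeries.constantCoeff (σ := Fin n) (R := A) (f i) = 0)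
    (hdet : IsUnit (Matrix.det (Matrix.of fun i j : Fin n =>
      MvPowerSeries.coeff (R := A) (Finsupp.single j 1) (f i)))) :
    Ideal.span (Set.range f) = RingHom.ker (MvPowerSeries.constantCoeff (σ := Fin n) (R := A)) := by
  classical
  apply le_antisymm
  · rw [Ideal.span_le]
    rintro _ ⟨i, rfl⟩
    exact h0 i
  intro g hg0
  rw [RingHom.mem_ker] at hg0
  set J : Matrix (Fin n) (Fin n) A :=
    Matrix.of fun i j : Fin n => MvPowerSeries.coeff (R := A) (Finsupp.single j 1) (f i) with hJ
  set K : Matrix (Fin n) (Fin n) A := J⁻¹ with hKdef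
  have hKJ : ∀ l j, ∑ i, K l i * J i j = if l = j then 1 else 0 := by
    intro l j
    have := Matrix.nonsing_inv_mul J hdet
    have h2 := congrFun (congrFun this l) j
    rwa [Matrix.mul_apply, Matrix.one_apply] at h2
  set q : Fin n → MvPowerSeries (Fin n) A :=
    fun i => f i - ∑ j, C (σ := Fin n) (R := A) (J i j) * X j with hqdef
  have hq : ∀ i, OrdGe 2 (q i) := by
    intro i d hd
    have hd1 : deg d ≤ 1 := by omega
    rcases eq_zero_or_single hd1 with rfl | ⟨l, rfl⟩
    · simp only [hqdef, map_sub, map_sum, coeff_C_mul, coeff_zero_X, mul_zero,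
        Finset.sum_const_zero, sub_zero, coeff_zero_eq_constantCoeff, h0 i]
    · simp only [hqdef, map_sub, map_sum, coeff_C_mul, coeff_index_single_X]
      rw [Finset.sum_congr rfl (fun j _ => by rw [mul_ite, mul_one, mul_zero]),
        Finset.sum_ite_eq Finset.univ l (fun j => J i j), if_pos (Finset.mem_univ l)]
      simp [hJ]
  have hfq : ∀ i, f i - q i = ∑ j, C (σ := Fin n) (R := A) (J i j) * X j := by
    intro i
    rw [hqdef, sub_sub_cancel]
  have hXid : ∀ l, (X l : MvPowerSeries (Fin n) A) =
      ∑ i, C (σ := Fin n) (R := A) (K l i) * (f i - q i) := by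
    intro l
    simp only [hfq, Finset.mul_sum]
    rw [Finset.sum_comm]
    have : ∀ j : Fin n, ∑ i, C (σ := Fin n) (R := A) (K l i) * (C (σ := Fin n) (R := A) (J i j) * X j)
        = C (σ := Fin n) (R := A) (if l = j then 1 else 0) * X j := by
      intro j
      rw [← hKJ l j, map_sum, Finset.sum_mul]
      exact Finset.sum_congr rfl fun i _ => by rw [map_mul]; ring
    simp only [this]
    rw [Finset.sum_congr rfl (fun j _ => by rw [apply_ite (C (σ := Fin n) (R := A)), map_one, map_zero,
      ite_mul, one_mul, zero_mul]), Finset.sum_ite_eq Finset.univ l (fun j => X j),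
      if_pos (Finset.mem_univ l)]
  -- the iteration
  set gs : ℕ → MvPowerSeries (Fin n) A := fun k => (pStep K q)^[k] g with hgsdef
  have hgs : ∀ k, OrdGe (k + 1) (gs k) := by
    intro k
    induction k with
    | zero =>
      intro d hd
      have : d = 0 := deg_eq_zero (by omega)
      subst this
      rwa [coeff_zero_eq_constantCoeff]
    | succ k ih =>
      have : gs (k + 1) = pStep K q (gs k) := Function.iterate_succ_apply' _ _ _
      rw [this]
      exact pStep_ordGe K q hq ih
  have hgs0 : ∀ k, coeff (R := A) 0 (gs k) = 0 := fun k => hgs k 0 (by rw [deg_zero]; omega)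
  have hiter : ∀ N, g = ∑ i, (∑ k ∈ Finset.range N, cStep K (gs k) i) * f i + gs N := by
    intro N
    induction N with
    | zero => simp [hgsdef]
    | succ N ih =>
      have hstep := step_eq K q f hXid (gs N) (hgs0 N)
      have : gs (N + 1) = pStep K q (gs N) := Function.iterate_succ_apply' _ _ _
      rw [ih, this]
      conv_lhs => rw [hstep]
      rw [← add_assoc, ← Finset.sum_add_distrib]
      congr 1
      refine Finset.sum_congr rfl fun i _ => ?_
      rw [Finset.sum_range_succ, add_mul]
  have hc : ∀ (k : ℕ) (i : Fin n) (d : Fin n →₀ ℕ), deg d < k →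
      coeff (R := A) d (cStep K (gs k) i) = 0 :=
    fun k i d hd => cStep_ordGe K (hgs k) i d hd
  -- the limit coefficients
  set L : Fin n → MvPowerSeries (Fin n) A :=
    fun i => fun d => coeff (R := A) d (∑ k ∈ Finset.range (deg d + 1), cStep K (gs k) i)
    with hLdef
  have stable : ∀ (i : Fin n) (d : Fin n →₀ ℕ) (N : ℕ), deg d < N →
      coeff (R := A) d (L i) = coeff (R := A) d (∑ k ∈ Finset.range N, cStep K (gs k) i) := by
    intro i d N hN
    have h1 : coeff (R := A) d (L i)
        = ∑ k ∈ Finset.range (deg d + 1), coeff (R := A) d (cStep K (gs k) i) := by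
      rw [coeff_apply]
      show coeff (R := A) d (∑ k ∈ Finset.range (deg d + 1), cStep K (gs k) i) = _
      rw [map_sum]
    rw [h1, map_sum]
    apply Finset.sum_subset (Finset.range_subset_range.mpr (by omega))
    intro k hk hk'
    rw [Finset.mem_range] at hk hk'
    exact hc k i d (by omega)
  have hfinal : g = ∑ i, L i * f i := by
    apply MvPowerSeries.ext
    intro d
    set N := deg d + 1 with hN
    have h2 : coeff (R := A) d (gs N) = 0 := hgs N d (by omega)
    have h3 : ∀ i, coeff (R := A) d (L i * f i)
        = coeff (R := A) d ((∑ k ∈ Finset.range N, cStep K (gs k) i) * f i) := by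
      intro i
      rw [coeff_mul, coeff_mul]
      apply Finset.sum_congr rfl
      rintro ⟨u, v⟩ huv
      rw [HasAntidiagonal.mem_antidiagonal] at huv
      have hu : deg u < N := by
        have : deg u + deg v = deg d := by rw [← deg_add, huv]
        omega
      rw [stable i u N hu]
    calc coeff (R := A) d g
        = coeff (R := A) d (∑ i, (∑ k ∈ Finset.range N, cStep K (gs k) i) * f i)
          + coeff (R := A) d (gs N) := by rw [← map_add, ← hiter N]
      _ = coeff (R := A) d (∑ i, L i * f i) := by
          rw [h2, add_zero, map_sum, map_sum]
          exact Finset.sum_congr rfl fun i _ => (h3 i).symm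
  rw [hfinal]
  exact Ideal.sum_mem _ fun i _ =>
    Ideal.mul_mem_left _ _ (Ideal.subset_span ⟨i, rfl⟩)

end FIFT

/-- (Formal inverse function theorem) Let `A` be a noetherian ring and
`f₁, …, f_n ∈ A[[y₁, …, y_n]]` power series with zero constant term such that the
determinant of the matrix of linear coefficients `(coeff of y_j in f_i)` is a unit of `A`.
Then `(f₁, …, f_n) = (y₁, …, y_n)`; in particular
`A[[y₁, …, y_n]]/(f₁, …, f_n) ≅ A`. -/
theorem formal_inverse_function
    (A : Type*) [CommRing A] [IsNoetherianRing A] (n : ℕ)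
    (f : Fin n → MvPowerSeries (Fin n) A)
    (h0 : ∀ i, MvPowerSeries.constantCoeff (σ := Fin n) (R := A) (f i) = 0)
    (hdet : IsUnit (Matrix.det (Matrix.of fun i j : Fin n =>
      MvPowerSeries.coeff (R := A) (Finsupp.single j 1) (f i)))) :
    Ideal.span (Set.range f) =
      Ideal.span (Set.range (MvPowerSeries.X : Fin n → MvPowerSeries (Fin n) A)) ∧
    Nonempty ((MvPowerSeries (Fin n) A ⧸ Ideal.span (Set.range f)) ≃+* A) := by
  classical
  have hX0 : ∀ i : Fin n, MvPowerSeries.constantCoeff (σ := Fin n) (R := A) (MvPowerSeries.X i) = 0 :=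
    fun i => MvPowerSeries.constantCoeff_X i
  have hXdet : IsUnit (Matrix.det (Matrix.of fun i j : Fin n =>
      MvPowerSeries.coeff (R := A) (Finsupp.single j 1)
        (MvPowerSeries.X i : MvPowerSeries (Fin n) A))) := by
    have hone : (Matrix.of fun i j : Fin n =>
        MvPowerSeries.coeff (R := A) (Finsupp.single j 1)
          (MvPowerSeries.X i : MvPowerSeries (Fin n) A)) = 1 := by
      ext i j
      rw [Matrix.of_apply, MvPowerSeries.coeff_index_single_X, Matrix.one_apply]
      simp [eq_comm]
    rw [hone, Matrix.det_one]
    exact isUnit_one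
  have h1 := FIFT.span_eq_ker f h0 hdet
  have h2 := FIFT.span_eq_ker _ hX0 hXdet
  refine ⟨by rw [h1, h2], ?_⟩
  refine ⟨(Ideal.quotEquivOfEq h1).trans (RingHom.quotientKerEquivOfSurjective ?_)⟩
  intro a
  exact ⟨MvPowerSeries.C (σ := Fin n) (R := A) a, MvPowerSeries.constantCoeff_C a⟩

end JetPaper
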